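/- arXiv:2309.04268 — 6 statements merged into one kernel-verified Lean document; each statement's English description precedes it below -/
import Mathlib

section
/- For every positive integer d, the sequence ν_d(k) is strictly decreasing in k on the positive integers: ν_d(k) > ν_d(k+1) for every integer k ≥ 1. -/
open Real Filter

/-- Distinct eigenvalues (up to constants) of the NTK on the sphere `S^d`:
`ν_d(k) = d^d · k^(k−2) · (k+d)^(−(k+d+1)) · (k² + k·d + d)`. -/
noncomputable def nuNT (d k : ℕ) : ℝ :=
  (d : ℝ) ^ (d : ℝ) * (k : ℝ) ^ ((k : ℝ) - 2) *
    ((k : ℝ) + (d : ℝ)) ^ (-((k : ℝ) + (d : ℝ) + 1)) *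
    ((k : ℝ) ^ 2 + (k : ℝ) * (d : ℝ) + (d : ℝ))

/-- Dimension of the space of spherical harmonics of degree `k` on `S^d ⊆ ℝ^(d+1)`. -/
def Nsph (d k : ℕ) : ℕ :=
  if k = 0 then 1
  else (k + d).choose k - (if 2 ≤ k then (k + d - 2).choose (k - 2) else 0)

/-- `λ_d(0) = 1` and `λ_d(k) = ν_d(k)` for `k ≥ 1`. -/
noncomputable def lamNT (d k : ℕ) : ℝ := if k = 0 then 1 else nuNT d k

lemma nu_key (a b : ℝ) (ha : 1 ≤ a) (hb : 1 ≤ b) :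
    b ^ b * (a+1) ^ ((a+1) - 2) * ((a+1) + b) ^ (-((a+1) + b + 1)) *
      ((a+1) ^ 2 + (a+1) * b + b)
    < b ^ b * a ^ (a - 2) * (a + b) ^ (-(a + b + 1)) * (a ^ 2 + a * b + b) := by
  have ha0 : (0:ℝ) < a := lt_of_lt_of_le one_pos ha
  have hb0 : (0:ℝ) < b := lt_of_lt_of_le one_pos hb
  have ha1 : (0:ℝ) < a + 1 := by linarith
  have hab : (0:ℝ) < a + b := by linarith
  have hab1 : (0:ℝ) < a + b + 1 := by linarith
  have hq : (0:ℝ) < a ^ 2 + a * b + b := by nlinarith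
  have hq' : (0:ℝ) < (a+1) ^ 2 + (a+1) * b + b := by nlinarith
  have hL : 0 < b ^ b * (a+1) ^ ((a+1) - 2) * ((a+1) + b) ^ (-((a+1) + b + 1)) *
      ((a+1) ^ 2 + (a+1) * b + b) := by positivity
  have hR : 0 < b ^ b * a ^ (a - 2) * (a + b) ^ (-(a + b + 1)) * (a ^ 2 + a * b + b) := by
    positivity
  rw [← Real.log_lt_log_iff hL hR]
  rw [Real.log_mul (by positivity) (ne_of_gt hq'),
      Real.log_mul (by positivity) (by positivity),
      Real.log_mul (by positivity) (by positivity),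
      Real.log_mul (by positivity) (ne_of_gt hq),
      Real.log_mul (by positivity) (by positivity),
      Real.log_mul (by positivity) (by positivity),
      Real.log_rpow hb0, Real.log_rpow ha1, Real.log_rpow ha0,
      Real.log_rpow (by linarith : (0:ℝ) < (a+1)+b), Real.log_rpow hab]
  -- key bounds
  have h1 : a * (Real.log (a+1) - Real.log a) ≤ 1 := by
    have := Real.log_le_sub_one_of_pos (show (0:ℝ) < (a+1)/a by positivity)
    rw [Real.log_div (by positivity) (ne_of_gt ha0)] at this
    have h2 : (a+1)/a - 1 = 1/a := by field_simp; ring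
    rw [h2] at this
    calc a * (Real.log (a+1) - Real.log a) ≤ a * (1/a) := by
          exact mul_le_mul_of_nonneg_left this (le_of_lt ha0)
      _ = 1 := by field_simp
  have h2 : (a + b + 1) * (Real.log (a+b) - Real.log (a+b+1)) ≤ -1 := by
    have := Real.log_le_sub_one_of_pos (show (0:ℝ) < (a+b)/(a+b+1) by positivity)
    rw [Real.log_div (ne_of_gt hab) (ne_of_gt hab1)] at this
    have he : (a+b)/(a+b+1) - 1 = -(1/(a+b+1)) := by field_simp; ring
    rw [he] at this
    calc (a + b + 1) * (Real.log (a+b) - Real.log (a+b+1))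
        ≤ (a + b + 1) * (-(1/(a+b+1))) :=
          mul_le_mul_of_nonneg_left this (le_of_lt hab1)
      _ = -1 := by field_simp
  have h3 : 2 * Real.log a + Real.log (a+1) + Real.log ((a+1)^2 + (a+1)*b + b)
      < 2 * Real.log (a+1) + Real.log (a+b+1) + Real.log (a^2 + a*b + b) := by
    have hpoly : a^2 * ((a+1)^2 + (a+1)*b + b) < (a+1)*(a+b+1)*(a^2+a*b+b) := by
      nlinarith [sq_nonneg a, sq_nonneg b, mul_pos ha0 hb0]
    have := Real.log_lt_log (by positivity) hpoly
    rw [Real.log_mul (by positivity) (ne_of_gt hq'),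
        Real.log_mul (by positivity) (ne_of_gt hq),
        Real.log_mul (by positivity) (ne_of_gt hab1),
        Real.log_pow] at this
    push_cast at this
    linarith
  have hcast : (a + 1) + b = a + b + 1 := by ring
  rw [hcast]
  nlinarith [h1, h2, h3]


/-- For every positive integer d, the sequence ν_d is strictly decreasing on the
positive integers. -/
theorem nuNT_strict_decreasing (d : ℕ) (hd : 1 ≤ d) :
    ∀ k : ℕ, 1 ≤ k → nuNT d (k + 1) < nuNT d k := by
  intro k hk
  have ha : (1:ℝ) ≤ (k:ℝ) := by exact_mod_cast hk
  have hb : (1:ℝ) ≤ (d:ℝ) := by exact_mod_cast hd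
  have := nu_key (k:ℝ) (d:ℝ) ha hb
  unfold nuNT
  push_cast
  convert this using 2
end

section
/- For every real number d ≥ 1, the function g(t) = (t−2)·ln t − (t+d+1)·ln(t+d) + ln(t² + t·d + d) is strictly decreasing on (0, ∞); equivalently, for every t > 0 one has ln(t/(t+d)) − (t³ + 2t²d + t d² + 3td + 2d²)/(t·(t+d)·(t² + td + d)) < 0, and this expression equals g′(t). -/
open Real Filter

/-- For any real d ≥ 1, the function g(t) = (t−2)·ln t − (t+d+1)·ln(t+d) + ln(t² + t·d + d)
is strictly decreasing on (0, ∞); moreover for every t > 0 its derivative equals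
ln(t/(t+d)) − (t³+2t²d+td²+3td+2d²)/(t·(t+d)·(t²+td+d)), which is negative. -/
theorem g_strict_anti (d : ℝ) (hd : 1 ≤ d) :
    StrictAntiOn
      (fun t : ℝ => (t - 2) * Real.log t - (t + d + 1) * Real.log (t + d)
        + Real.log (t ^ 2 + t * d + d)) (Set.Ioi 0) ∧
    ∀ t : ℝ, 0 < t →
      HasDerivAt
        (fun t : ℝ => (t - 2) * Real.log t - (t + d + 1) * Real.log (t + d)
          + Real.log (t ^ 2 + t * d + d))
        (Real.log (t / (t + d)) -
          (t ^ 3 + 2 * t ^ 2 * d + t * d ^ 2 + 3 * t * d + 2 * d ^ 2) /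
            (t * (t + d) * (t ^ 2 + t * d + d))) t ∧
      Real.log (t / (t + d)) -
          (t ^ 3 + 2 * t ^ 2 * d + t * d ^ 2 + 3 * t * d + 2 * d ^ 2) /
            (t * (t + d) * (t ^ 2 + t * d + d)) < 0 := by
  have d1 : (0:ℝ) < d := lt_of_lt_of_le one_pos hd
  have hderiv : ∀ t : ℝ, 0 < t →
      HasDerivAt
        (fun t : ℝ => (t - 2) * Real.log t - (t + d + 1) * Real.log (t + d)
          + Real.log (t ^ 2 + t * d + d))
        (Real.log (t / (t + d)) -
          (t ^ 3 + 2 * t ^ 2 * d + t * d ^ 2 + 3 * t * d + 2 * d ^ 2) /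
            (t * (t + d) * (t ^ 2 + t * d + d))) t := by
    intro t ht
    have htd : 0 < t + d := by linarith
    have hP : 0 < t ^ 2 + t * d + d := by nlinarith
    have h1 : HasDerivAt (fun t : ℝ => (t - 2) * Real.log t)
        (1 * Real.log t + (t - 2) * t⁻¹) t :=
      ((hasDerivAt_id t).sub_const 2).mul (Real.hasDerivAt_log ht.ne')
    have hlog2 : HasDerivAt (fun t : ℝ => Real.log (t + d)) ((t + d)⁻¹ * 1) t :=
      by have := (Real.hasDerivAt_log htd.ne').comp t ((hasDerivAt_id t).add_const d); exact this
    have h2 : HasDerivAt (fun t : ℝ => (t + d + 1) * Real.log (t + d))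
        (1 * Real.log (t + d) + (t + d + 1) * ((t + d)⁻¹ * 1)) t :=
      (((hasDerivAt_id t).add_const d).add_const 1).mul hlog2
    have hq : HasDerivAt (fun t : ℝ => t ^ 2 + t * d + d)
        ((2 : ℕ) * t ^ 1 + 1 * d) t :=
      ((hasDerivAt_pow 2 t).add ((hasDerivAt_id t).mul_const d)).add_const d
    have h3 : HasDerivAt (fun t : ℝ => Real.log (t ^ 2 + t * d + d))
        ((t ^ 2 + t * d + d)⁻¹ * ((2 : ℕ) * t ^ 1 + 1 * d)) t :=
      by have := (Real.hasDerivAt_log hP.ne').comp t hq; exact this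
    have h := (h1.sub h2).add h3
    refine h.congr_deriv ?_
    rw [Real.log_div ht.ne' htd.ne']
    push_cast
    field_simp
    ring
  have hneg : ∀ t : ℝ, 0 < t →
      Real.log (t / (t + d)) -
          (t ^ 3 + 2 * t ^ 2 * d + t * d ^ 2 + 3 * t * d + 2 * d ^ 2) /
            (t * (t + d) * (t ^ 2 + t * d + d)) < 0 := by
    intro t ht
    have htd : 0 < t + d := by linarith
    have hP : 0 < t ^ 2 + t * d + d := by nlinarith
    have hlog : Real.log (t / (t + d)) < 0 :=
      Real.log_neg (div_pos ht htd) ((div_lt_one htd).mpr (by linarith))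
    have hfrac : 0 < (t ^ 3 + 2 * t ^ 2 * d + t * d ^ 2 + 3 * t * d + 2 * d ^ 2) /
        (t * (t + d) * (t ^ 2 + t * d + d)) :=
      div_pos (by nlinarith) (by positivity)
    linarith
  constructor
  · apply strictAntiOn_of_deriv_neg (convex_Ioi 0)
    · intro t ht
      exact (hderiv t ht).differentiableAt.continuousAt.continuousWithinAt
    · intro t ht
      rw [interior_Ioi] at ht
      rw [(hderiv t ht).deriv]
      exact hneg t ht
  · intro t ht
    exact ⟨hderiv t ht, hneg t ht⟩
end

section
/- For every positive integer d, the series Σ_{k=1}^∞ N(d,k) · ν_d(k) converges (has a finite value). -/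
open Real Filter

lemma Nsph_le_aux (e m : ℕ) : Nsph (e + 1) (m + 2) ≤ 2 * (m + e + 3) ^ e := by
  have h0 : Nsph (e + 1) (m + 2)
      = (m + e + 3).choose (m + 2) - (m + e + 1).choose m := by
    simp only [Nsph, if_neg (by omega : ¬ m + 2 = 0), if_pos (by omega : 2 ≤ m + 2)]
    have e1 : m + 2 + (e + 1) = m + e + 3 := by omega
    rw [e1]
    have e2 : m + e + 3 - 2 = m + e + 1 := by omega
    have e3 : m + 2 - 2 = m := by omega
    rw [e2, e3]
  have h1 : (m + e + 3).choose (m + 2)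
      = (m + e + 1).choose m + ((m + e + 1).choose (m + 1) + (m + e + 2).choose (m + 2)) := by
    have p1 : (m + e + 3).choose (m + 2)
        = (m + e + 2).choose (m + 1) + (m + e + 2).choose (m + 2) := by
      have := Nat.choose_succ_succ' (m + e + 2) (m + 1)
      simpa [show m + e + 2 + 1 = m + e + 3 from rfl] using this
    have p2 : (m + e + 2).choose (m + 1)
        = (m + e + 1).choose m + (m + e + 1).choose (m + 1) := by
      have := Nat.choose_succ_succ' (m + e + 1) m
      simpa [show m + e + 1 + 1 = m + e + 2 from rfl] using this
    omega
  have h2 : (m + e + 1).choose (m + 1) ≤ (m + e + 3) ^ e := by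
    calc (m + e + 1).choose (m + 1) = (m + e + 1).choose e := by
          have h := Nat.choose_symm (show m + 1 ≤ m + e + 1 by omega)
          rw [show m + e + 1 - (m + 1) = e by omega] at h
          exact h.symm
      _ ≤ (m + e + 1) ^ e := Nat.choose_le_pow _ _
      _ ≤ (m + e + 3) ^ e := Nat.pow_le_pow_left (by omega) e
  have h3 : (m + e + 2).choose (m + 2) ≤ (m + e + 3) ^ e := by
    calc (m + e + 2).choose (m + 2) = (m + e + 2).choose e := by
          have h := Nat.choose_symm (show m + 2 ≤ m + e + 2 by omega)
          rw [show m + e + 2 - (m + 2) = e by omega] at h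
          exact h.symm
      _ ≤ (m + e + 2) ^ e := Nat.choose_le_pow _ _
      _ ≤ (m + e + 3) ^ e := Nat.pow_le_pow_left (by omega) e
  omega

lemma key_bound (d m : ℕ) (hd : 1 ≤ d) :
    (Nsph d (m + 2) : ℝ) * nuNT d (m + 2)
      ≤ 2 * (d : ℝ) ^ (d : ℝ) * (1 / ((m : ℝ) + 1) ^ 2) := by
  set K : ℝ := ((m : ℕ) : ℝ) + 2 with hK
  set B : ℝ := K + (d : ℝ) with hB
  have hd1 : (1 : ℝ) ≤ (d : ℝ) := by exact_mod_cast hd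
  have hK2 : (2 : ℝ) ≤ K := by
    rw [hK]; have : (0 : ℝ) ≤ (m : ℝ) := Nat.cast_nonneg m; linarith
  have hKB : K ≤ B := by rw [hB]; linarith
  have hB0 : (0 : ℝ) < B := by linarith
  have hKcast : ((m + 2 : ℕ) : ℝ) = K := by push_cast [hK]; ring
  have hnu : nuNT d (m + 2)
      = (d : ℝ) ^ (d : ℝ) * K ^ (K - 2) * B ^ (-(K + (d : ℝ) + 1))
        * (K ^ 2 + K * (d : ℝ) + (d : ℝ)) := by
    simp [nuNT, hKcast, hB]
  -- bound on Nsph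
  obtain ⟨e, rfl⟩ : ∃ e, d = e + 1 := ⟨d - 1, by omega⟩
  have hN : (Nsph (e + 1) (m + 2) : ℝ) ≤ 2 * B ^ ((e : ℕ) : ℝ) := by
    have := Nsph_le_aux e m
    have hcast : ((2 * (m + e + 3) ^ e : ℕ) : ℝ) = 2 * ((m : ℝ) + e + 3) ^ (e : ℕ) := by
      push_cast; ring
    have hBe : ((m : ℝ) + e + 3) ^ (e : ℕ) = B ^ ((e : ℕ) : ℝ) := by
      rw [Real.rpow_natCast]
      congr 1
      simp [hB, hK]; ring
    calc (Nsph (e + 1) (m + 2) : ℝ) ≤ ((2 * (m + e + 3) ^ e : ℕ) : ℝ) := by exact_mod_cast this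
      _ = 2 * B ^ ((e : ℕ) : ℝ) := by rw [hcast, hBe]
  -- bound on middle factors
  have hKe : K ^ (K - 2) ≤ B ^ (K - 2) :=
    Real.rpow_le_rpow (by linarith) hKB (by linarith)
  have hquad : K ^ 2 + K * ((e : ℝ) + 1) + ((e : ℝ) + 1) ≤ B ^ (2 : ℝ) := by
    rw [Real.rpow_two]
    have hdcast : ((e + 1 : ℕ) : ℝ) = (e : ℝ) + 1 := by push_cast; ring
    have he0 : (0 : ℝ) ≤ (e : ℝ) := Nat.cast_nonneg e
    have : B = K + ((e : ℝ) + 1) := by rw [hB, hdcast]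
    nlinarith [this]
  have hD : (0 : ℝ) ≤ ((e + 1 : ℕ) : ℝ) ^ ((e + 1 : ℕ) : ℝ) := Real.rpow_nonneg (by positivity) _
  have hdcast : ((e + 1 : ℕ) : ℝ) = (e : ℝ) + 1 := by push_cast; ring
  -- assemble
  have hprod : (Nsph (e + 1) (m + 2) : ℝ) * nuNT (e + 1) (m + 2)
      ≤ 2 * B ^ ((e : ℕ) : ℝ) * (((e + 1 : ℕ) : ℝ) ^ ((e + 1 : ℕ) : ℝ) * B ^ (K - 2)
          * B ^ (-(K + ((e + 1 : ℕ) : ℝ) + 1)) * B ^ (2 : ℝ)) := by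
    rw [hnu]
    have hnn1 : (0 : ℝ) ≤ K ^ (K - 2) := Real.rpow_nonneg (by linarith) _
    have hnn2 : (0 : ℝ) ≤ B ^ (-(K + ((e + 1 : ℕ) : ℝ) + 1)) := Real.rpow_nonneg (by linarith) _
    have hnn3 : (0 : ℝ) ≤ K ^ 2 + K * ((e + 1 : ℕ) : ℝ) + ((e + 1 : ℕ) : ℝ) := by positivity
    have hquad' : K ^ 2 + K * ((e + 1 : ℕ) : ℝ) + ((e + 1 : ℕ) : ℝ) ≤ B ^ (2 : ℝ) := by
      rw [hdcast]; exact hquad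
    have hBe0 : (0 : ℝ) ≤ B ^ ((e : ℕ) : ℝ) := Real.rpow_nonneg (by linarith) _
    have hBK0 : (0 : ℝ) ≤ B ^ (K - 2) := Real.rpow_nonneg (by linarith) _
    calc (Nsph (e + 1) (m + 2) : ℝ)
          * (((e + 1 : ℕ) : ℝ) ^ ((e + 1 : ℕ) : ℝ) * K ^ (K - 2)
              * B ^ (-(K + ((e + 1 : ℕ) : ℝ) + 1))
              * (K ^ 2 + K * ((e + 1 : ℕ) : ℝ) + ((e + 1 : ℕ) : ℝ)))
        ≤ (2 * B ^ ((e : ℕ) : ℝ))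
          * (((e + 1 : ℕ) : ℝ) ^ ((e + 1 : ℕ) : ℝ) * B ^ (K - 2)
              * B ^ (-(K + ((e + 1 : ℕ) : ℝ) + 1)) * B ^ (2 : ℝ)) := by
          apply mul_le_mul hN _ (by positivity) (by positivity)
          apply mul_le_mul _ hquad' hnn3 (by positivity)
          apply mul_le_mul_of_nonneg_right _ hnn2
          exact mul_le_mul_of_nonneg_left hKe hD
      _ = 2 * B ^ ((e : ℕ) : ℝ) * (((e + 1 : ℕ) : ℝ) ^ ((e + 1 : ℕ) : ℝ) * B ^ (K - 2)
              * B ^ (-(K + ((e + 1 : ℕ) : ℝ) + 1)) * B ^ (2 : ℝ)) := rfl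
  have hcollapse : 2 * B ^ ((e : ℕ) : ℝ) * (((e + 1 : ℕ) : ℝ) ^ ((e + 1 : ℕ) : ℝ) * B ^ (K - 2)
          * B ^ (-(K + ((e + 1 : ℕ) : ℝ) + 1)) * B ^ (2 : ℝ))
      = 2 * ((e + 1 : ℕ) : ℝ) ^ ((e + 1 : ℕ) : ℝ) * B ^ (-2 : ℝ) := by
    have hmul : B ^ ((e : ℕ) : ℝ) * B ^ (K - 2) * B ^ (-(K + ((e + 1 : ℕ) : ℝ) + 1))
          * B ^ (2 : ℝ)
        = B ^ (((e : ℕ) : ℝ) + (K - 2) + (-(K + ((e + 1 : ℕ) : ℝ) + 1)) + 2) := by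
      rw [Real.rpow_add hB0, Real.rpow_add hB0, Real.rpow_add hB0]
    have hexp : ((e : ℕ) : ℝ) + (K - 2) + (-(K + ((e + 1 : ℕ) : ℝ) + 1)) + 2 = -2 := by
      rw [hdcast]; ring
    calc 2 * B ^ ((e : ℕ) : ℝ) * (((e + 1 : ℕ) : ℝ) ^ ((e + 1 : ℕ) : ℝ) * B ^ (K - 2)
          * B ^ (-(K + ((e + 1 : ℕ) : ℝ) + 1)) * B ^ (2 : ℝ))
        = 2 * ((e + 1 : ℕ) : ℝ) ^ ((e + 1 : ℕ) : ℝ)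
            * (B ^ ((e : ℕ) : ℝ) * B ^ (K - 2) * B ^ (-(K + ((e + 1 : ℕ) : ℝ) + 1))
              * B ^ (2 : ℝ)) := by ring
      _ = 2 * ((e + 1 : ℕ) : ℝ) ^ ((e + 1 : ℕ) : ℝ) * B ^ (-2 : ℝ) := by rw [hmul, hexp]
  have hfin : B ^ (-2 : ℝ) ≤ 1 / ((m : ℝ) + 1) ^ 2 := by
    have hm1 : (0 : ℝ) < (m : ℝ) + 1 := by positivity
    have hle : (m : ℝ) + 1 ≤ B := by rw [hB, hK]; linarith
    have := Real.rpow_le_rpow_of_nonpos hm1 hle (by norm_num : (-2 : ℝ) ≤ 0)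
    calc B ^ (-2 : ℝ) ≤ ((m : ℝ) + 1) ^ (-2 : ℝ) := this
      _ = 1 / ((m : ℝ) + 1) ^ 2 := by
        rw [Real.rpow_neg (le_of_lt hm1), Real.rpow_two, one_div]
  calc (Nsph (e + 1) (m + 2) : ℝ) * nuNT (e + 1) (m + 2)
      ≤ 2 * ((e + 1 : ℕ) : ℝ) ^ ((e + 1 : ℕ) : ℝ) * B ^ (-2 : ℝ) := by
        rw [← hcollapse]; exact hprod
    _ ≤ 2 * ((e + 1 : ℕ) : ℝ) ^ ((e + 1 : ℕ) : ℝ) * (1 / ((m : ℝ) + 1) ^ 2) := by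
        have hc : (0 : ℝ) ≤ 2 * ((e + 1 : ℕ) : ℝ) ^ ((e + 1 : ℕ) : ℝ) := by positivity
        exact mul_le_mul_of_nonneg_left hfin hc

lemma nuNT_nonneg (d k : ℕ) : 0 ≤ nuNT d k := by
  unfold nuNT; positivity

/-- For every positive integer d, the series Σ_{k=1}^∞ N(d,k)·ν_d(k) converges. -/
theorem summable_Nsph_mul_nuNT (d : ℕ) (hd : 1 ≤ d) :
    Summable (fun k : ℕ => (Nsph d (k + 1) : ℝ) * nuNT d (k + 1)) := by
  rw [← summable_nat_add_iff 1]
  have hcomp : Summable (fun m : ℕ => 2 * (d : ℝ) ^ (d : ℝ) * (1 / ((m : ℝ) + 1) ^ 2)) := by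
    apply Summable.mul_left
    have h2 : Summable (fun n : ℕ => 1 / (n : ℝ) ^ 2) :=
      summable_one_div_nat_pow.mpr one_lt_two
    have := (summable_nat_add_iff 1).mpr h2
    simpa using this
  apply Summable.of_nonneg_of_le _ _ hcomp
  · intro n
    exact mul_nonneg (Nat.cast_nonneg _) (nuNT_nonneg _ _)
  · intro n
    have : n + 1 + 1 = n + 2 := by omega
    rw [this]
    exact key_bound d n hd
end

section
/- There exists an absolute constant C > 0 such that for every integer p that is either 1 or a positive even number there is a constant D(p) (depending only on p) with the property that for every integer d ≥ D(p): ν_d(p) · Σ_{k=0}^p N(d,k) ≤ C · p^(−3/2). -/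
open Real Filter

lemma aux_choose_mono (n k : ℕ) : n.choose k ≤ (n+1).choose (k+1) := by
  rw [Nat.choose_succ_succ]; omega

lemma aux_sum (d p : ℕ) (hp : 1 ≤ p) :
    ∑ k ∈ Finset.range (p+1), Nsph d k = (p+d).choose p + (p+d-1).choose (p-1) := by
  induction p, hp using Nat.le_induction with
  | base => simp [Nsph, Finset.sum_range_succ, Nat.choose_one_right, Nat.add_comm]
  | succ p hp ih =>
      obtain ⟨q, rfl⟩ : ∃ q, p = q + 1 := ⟨p - 1, by omega⟩
      rw [Finset.sum_range_succ, ih]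
      have h1 : Nsph d (q+1+1) = (q+1+1+d).choose (q+1+1) - (q+d).choose q := by
        simp only [Nsph, if_neg (by omega : ¬ q+1+1 = 0), if_pos (by omega : 2 ≤ q+1+1)]
        congr 2 <;> omega
      have h2 : (q+d).choose q ≤ (q+1+1+d).choose (q+1+1) :=
        le_trans (aux_choose_mono _ _) (by
          have := aux_choose_mono (q+d+1) (q+1)
          rw [show q+1+1+d = q+d+1+1 by omega]; exact this)
      rw [h1]
      have h3 : (q+1+d-1).choose (q+1-1) = (q+d).choose q := by congr 1 <;> omega
      have h4 : (q+1+1+d-1).choose (q+1+1-1) = (q+1+d).choose (q+1) := by congr 1 <;> omega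
      rw [h3, h4]
      omega

lemma aux_sumR (d p : ℕ) (hp : 1 ≤ p) (h7 : 7*p ≤ d) :
    ∑ k ∈ Finset.range (p + 1), (Nsph d k : ℝ) ≤
      9/8 * ((p:ℝ)+(d:ℝ))^p / p.factorial := by
  have hP0 : (0:ℝ) < p := by exact_mod_cast hp
  have hPQ : (0:ℝ) < (p:ℝ) + d := by positivity
  have hfacpos : (0:ℝ) < (p.factorial : ℝ) := by exact_mod_cast p.factorial_pos
  rw [← Nat.cast_sum, aux_sum d p hp, Nat.cast_add]
  have h1 : (((p+d).choose p : ℕ) : ℝ) ≤ ((p:ℝ)+d)^p / p.factorial := by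
    have := Nat.choose_le_pow_div (α := ℝ) p (p+d)
    push_cast at this
    exact this
  have h2 : (((p+d-1).choose (p-1) : ℕ) : ℝ) ≤ (p:ℝ) * ((p:ℝ)+d)^(p-1) / p.factorial := by
    have hc := Nat.choose_le_pow_div (α := ℝ) (p-1) (p+d-1)
    have hb : (((p+d-1 : ℕ)) : ℝ)^(p-1) ≤ ((p:ℝ)+d)^(p-1) := by
      apply pow_le_pow_left₀ (by positivity)
      push_cast [Nat.cast_sub (by omega : 1 ≤ p + d)]
      linarith
    have hfac : (p.factorial : ℝ) = (p:ℝ) * ((p-1).factorial : ℝ) := by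
      obtain ⟨q, rfl⟩ : ∃ q, p = q + 1 := ⟨p - 1, by omega⟩
      simp [Nat.factorial_succ]
    calc (((p+d-1).choose (p-1) : ℕ) : ℝ)
        ≤ (((p+d-1 : ℕ)) : ℝ)^(p-1) / ((p-1).factorial : ℝ) := hc
      _ ≤ ((p:ℝ)+d)^(p-1) / ((p-1).factorial : ℝ) := by gcongr
      _ = (p:ℝ) * ((p:ℝ)+d)^(p-1) / p.factorial := by
          rw [hfac]; field_simp
  have h3 : ((p:ℝ)+d)^p = ((p:ℝ)+d)^(p-1) * ((p:ℝ)+d) := by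
    rw [← pow_succ]; congr 1; omega
  have h4 : (p:ℝ) * ((p:ℝ)+d)^(p-1) ≤ (1/8) * ((p:ℝ)+d)^p := by
    rw [h3]
    have h8 : 8 * (p:ℝ) ≤ (p:ℝ) + d := by
      have : (7*p : ℝ) ≤ d := by exact_mod_cast h7
      linarith
    have hpow : (0:ℝ) ≤ ((p:ℝ)+d)^(p-1) := by positivity
    nlinarith
  have hadd := add_le_add h1 h2
  rw [← add_div] at hadd
  calc _ ≤ (((p:ℝ)+d)^p + (p:ℝ) * ((p:ℝ)+d)^(p-1)) / (p.factorial : ℝ) := hadd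
    _ ≤ (9/8 * ((p:ℝ)+d)^p) / (p.factorial : ℝ) := by gcongr ?_ / _; linarith
    _ = 9/8 * ((p:ℝ)+d)^p / p.factorial := rfl

lemma aux_log (y : ℝ) (hy : 0 < y) : 1 - y⁻¹ ≤ Real.log y := by
  have h := Real.log_le_sub_one_of_pos (inv_pos.mpr hy)
  rw [Real.log_inv] at h
  linarith

lemma aux_exp (P Q : ℝ) (hP : 0 < P) (hQ : 0 < Q) :
    Q ^ Q * (P+Q) ^ (-Q) ≤ Real.exp (-P + P^2/Q) := by
  have hPQ : 0 < P + Q := by linarith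
  have h1 : Q ^ Q * (P+Q) ^ (-Q) = (Q / (P+Q)) ^ Q := by
    rw [Real.div_rpow hQ.le hPQ.le, Real.rpow_neg hPQ.le, div_eq_mul_inv]
  rw [h1, ← Real.log_le_iff_le_exp (by positivity), Real.log_rpow (by positivity)]
  have h2 : Real.log (Q / (P+Q)) = - Real.log ((P+Q)/Q) := by
    rw [← Real.log_inv]; congr 1; field_simp
  rw [h2]
  have h3 : 1 - ((P+Q)/Q)⁻¹ ≤ Real.log ((P+Q)/Q) := aux_log _ (by positivity)
  have h4 : ((P+Q)/Q)⁻¹ = Q/(P+Q) := by field_simp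
  rw [h4] at h3
  have h6 : P^2/(P+Q) ≤ P^2/Q :=
    div_le_div_of_nonneg_left (by positivity) hQ (by linarith)
  have h5 : Q * (1 - Q/(P+Q)) = P - P^2/(P+Q) := by field_simp; ring
  nlinarith [mul_le_mul_of_nonneg_left h3 hQ.le]

lemma aux_stirling (p : ℕ) (hp : 1 ≤ p) :
    Real.sqrt p * (p:ℝ)^p * Real.exp (-(p:ℝ)) ≤ (p.factorial : ℝ) := by
  obtain ⟨q, rfl⟩ : ∃ q, p = q + 1 := ⟨p - 1, by omega⟩
  have hlb : Real.sqrt π ≤ Stirling.stirlingSeq (q+1) := by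
    have hlim : Tendsto (Stirling.stirlingSeq ∘ Nat.succ) atTop (nhds (√π)) :=
      (Filter.tendsto_add_atTop_iff_nat 1).mpr Stirling.tendsto_stirlingSeq_sqrt_pi
    exact Stirling.stirlingSeq'_antitone.le_of_tendsto hlim q
  have h1 : (1:ℝ) ≤ Stirling.stirlingSeq (q+1) :=
    le_trans (by rw [show (1:ℝ) = Real.sqrt 1 by simp]; exact
      Real.sqrt_le_sqrt (by linarith [Real.pi_gt_three])) hlb
  rw [Stirling.stirlingSeq, le_div_iff₀ (by positivity), one_mul] at h1
  set p := q + 1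
  have hp0 : (0:ℝ) < p := by positivity
  have key : Real.sqrt p * (p:ℝ)^p * Real.exp (-(p:ℝ)) ≤
      Real.sqrt (2*p) * ((p:ℝ)/Real.exp 1)^p := by
    have e1 : ((p:ℝ)/Real.exp 1)^p = (p:ℝ)^p * Real.exp (-(p:ℝ)) := by
      rw [div_pow, ← Real.exp_nat_mul, Real.exp_neg]
      field_simp
    rw [e1, ← mul_assoc]
    have : Real.sqrt p ≤ Real.sqrt (2*p) := Real.sqrt_le_sqrt (by linarith)
    have hpos : (0:ℝ) ≤ (p:ℝ)^p * Real.exp (-(p:ℝ)) := by positivity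
    nlinarith [Real.sqrt_nonneg (p:ℝ), Real.exp_pos (-(p:ℝ)), pow_pos hp0 p]
  exact le_trans key h1

lemma aux_exp18 : Real.exp (1/8 : ℝ) ≤ 8/7 := by
  have h := Real.add_one_le_exp (-(1/8) : ℝ)
  have h2 : Real.exp (1/8 : ℝ) * Real.exp (-(1/8) : ℝ) = 1 := by
    rw [← Real.exp_add]; norm_num
  nlinarith [Real.exp_pos (1/8 : ℝ), Real.exp_pos (-(1/8) : ℝ)]

lemma aux_nu (d p : ℕ) (hp : 1 ≤ p) (hd8 : 8*p^2 ≤ d) :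
    nuNT d p * (9/8 * ((p:ℝ)+(d:ℝ))^p / p.factorial) ≤ 4 * (p:ℝ)^(-(3/2:ℝ)) := by
  unfold nuNT
  set P : ℝ := (p : ℝ) with hPdef
  set Q : ℝ := (d : ℝ) with hQdef
  have hP1 : (1:ℝ) ≤ P := by rw [hPdef]; exact_mod_cast hp
  have hP0 : (0:ℝ) < P := by linarith
  have hQ8 : 8 * P ^ 2 ≤ Q := by rw [hPdef, hQdef]; exact_mod_cast hd8
  have hQ0 : (0:ℝ) < Q := by nlinarith
  have hPQ : (0:ℝ) < P + Q := by linarith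
  have hfacpos : (0:ℝ) < (p.factorial : ℝ) := by exact_mod_cast p.factorial_pos
  have hsplit : (P+Q)^(-(P+Q+1)) = (P+Q)^(-Q) * (P+Q)^(-(P+1)) := by
    rw [show -(P+Q+1) = -Q + -(P+1) by ring, Real.rpow_add hPQ]
  have hA : Q^Q * (P+Q)^(-Q) ≤ Real.exp (1/8) * Real.exp (-P) := by
    refine le_trans (aux_exp P Q hP0 hQ0) ?_
    rw [← Real.exp_add]
    apply Real.exp_le_exp.mpr
    have : P^2/Q ≤ 1/8 := by rw [div_le_iff₀ hQ0]; nlinarith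
    linarith
  have hB : P^2 + P*Q + Q ≤ (P+1)*(P+Q) := by nlinarith
  have hcollapse : (P+Q)^(-(P+1)) * ((P+Q) * (P+Q)^p) = 1 := by
    have e1 : (P+Q) * (P+Q)^p = (P+Q)^(P+1) := by
      rw [show P+1 = ((p+1:ℕ):ℝ) by push_cast; ring, Real.rpow_natCast]
      ring
    rw [e1, ← Real.rpow_add hPQ, show -(P+1)+(P+1) = 0 by ring, Real.rpow_zero]
  have hrpow2 : (0:ℝ) ≤ P^(P-2) := Real.rpow_nonneg hP0.le _
  have hrpowm : (0:ℝ) ≤ (P+Q)^(-(P+1)) := Real.rpow_nonneg hPQ.le _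
  have hst := aux_stirling p hp
  have hkey : P^(-(3/2:ℝ)) * (Real.sqrt P * P^p) = P * P^(P-2) := by
    rw [Real.sqrt_eq_rpow, ← Real.rpow_natCast P p, ← Real.rpow_add hP0,
      ← Real.rpow_add hP0]
    rw [show P * P^(P-2) = P^(1:ℝ) * P^(P-2) by rw [Real.rpow_one],
      ← Real.rpow_add hP0]
    congr 1
    ring
  calc Q^Q * P^(P-2) * (P+Q)^(-(P+Q+1)) * (P^2+P*Q+Q) * (9/8 * (P+Q)^p / p.factorial)
      = (Q^Q * (P+Q)^(-Q)) *
        ((P^2+P*Q+Q) * (P^(P-2) * ((P+Q)^(-(P+1)) * (9/8 * (P+Q)^p / p.factorial)))) := by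
        rw [hsplit]; ring
    _ ≤ (Real.exp (1/8) * Real.exp (-P)) *
        (((P+1)*(P+Q)) * (P^(P-2) * ((P+Q)^(-(P+1)) * (9/8 * (P+Q)^p / p.factorial)))) := by
        gcongr
    _ = (Real.exp (1/8) * (9/8) * (P+1) * P^(P-2) * Real.exp (-P) / p.factorial) *
        ((P+Q)^(-(P+1)) * ((P+Q) * (P+Q)^p)) := by ring
    _ = Real.exp (1/8) * (9/8) * (P+1) * P^(P-2) * Real.exp (-P) / p.factorial := by
        rw [hcollapse, mul_one]
    _ ≤ 4 * P^(-(3/2:ℝ)) := by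
        rw [div_le_iff₀ hfacpos]
        calc Real.exp (1/8) * (9/8) * (P+1) * P^(P-2) * Real.exp (-P)
            ≤ 4 * P^(-(3/2:ℝ)) * (Real.sqrt P * P^p * Real.exp (-P)) := by
              have hre : 4 * P^(-(3/2:ℝ)) * (Real.sqrt P * P^p * Real.exp (-P))
                  = 4 * P * P^(P-2) * Real.exp (-P) := by
                rw [show 4 * P^(-(3/2:ℝ)) * (Real.sqrt P * P^p * Real.exp (-P))
                    = 4 * (P^(-(3/2:ℝ)) * (Real.sqrt P * P^p)) * Real.exp (-P) by ring, hkey]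
                ring
              rw [hre]
              have h9 : Real.exp (1/8) * (9/8) * (P+1) ≤ 4 * P := by
                nlinarith [aux_exp18, Real.exp_pos (1/8:ℝ)]
              have hXE : (0:ℝ) ≤ P^(P-2) * Real.exp (-P) :=
                mul_nonneg hrpow2 (Real.exp_pos _).le
              calc Real.exp (1/8) * (9/8) * (P+1) * P^(P-2) * Real.exp (-P)
                  = (Real.exp (1/8) * (9/8) * (P+1)) * (P^(P-2) * Real.exp (-P)) := by ring
                _ ≤ (4*P) * (P^(P-2) * Real.exp (-P)) := mul_le_mul_of_nonneg_right h9 hXE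
                _ = 4 * P * P^(P-2) * Real.exp (-P) := by ring
          _ ≤ 4 * P^(-(3/2:ℝ)) * (p.factorial : ℝ) := by
              gcongr

/-- An absolute constant C > 0 such that for every p that is 1 or positive even and all
large d: ν_d(p) · Σ_{k=0}^p N(d,k) ≤ C·p^(−3/2). -/
theorem nuNT_mul_sum_Nsph_le :
    ∃ C : ℝ, 0 < C ∧
      ∀ p : ℕ, (p = 1 ∨ (Even p ∧ 0 < p)) → ∃ D : ℕ, ∀ d : ℕ, D ≤ d →
        nuNT d p * ∑ k ∈ Finset.range (p + 1), (Nsph d k : ℝ) ≤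
          C * (p : ℝ) ^ (-(3 / 2 : ℝ)) := by
  refine ⟨4, by norm_num, fun p hp => ?_⟩
  have hp1 : 1 ≤ p := by rcases hp with h | ⟨_, h⟩ <;> omega
  refine ⟨8 * p ^ 2, fun d hd => ?_⟩
  have hpp : p ≤ p^2 := Nat.le_self_pow (by norm_num) p
  have h7 : 7 * p ≤ d := by omega
  have hnu_nonneg : 0 ≤ nuNT d p := by
    unfold nuNT
    have h1 : (0:ℝ) ≤ (d:ℝ) ^ (d:ℝ) := Real.rpow_nonneg (Nat.cast_nonneg d) _
    have h2 : (0:ℝ) ≤ (p:ℝ) ^ ((p:ℝ) - 2) := Real.rpow_nonneg (Nat.cast_nonneg p) _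
    have h3 : (0:ℝ) ≤ ((p:ℝ) + (d:ℝ)) ^ (-((p:ℝ) + (d:ℝ) + 1)) :=
      Real.rpow_nonneg (by positivity) _
    have h4 : (0:ℝ) ≤ (p:ℝ)^2 + (p:ℝ)*(d:ℝ) + (d:ℝ) := by positivity
    positivity
  calc nuNT d p * ∑ k ∈ Finset.range (p + 1), (Nsph d k : ℝ)
      ≤ nuNT d p * (9/8 * ((p:ℝ)+(d:ℝ))^p / p.factorial) :=
        mul_le_mul_of_nonneg_left (aux_sumR d p hp1 h7) hnu_nonneg
    _ ≤ 4 * (p:ℝ)^(-(3/2:ℝ)) := aux_nu d p hp1 hd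
    _ = 4 * (p:ℝ)^(-(3/2:ℝ)) := rfl
end

section
/- There exist absolute constants C4, C5 > 0 and an absolute constant D such that for every integer d ≥ D and every integer k with 1 ≤ k ≤ d^(0.99): C4 · k^(−3/2) ≤ N(d,k) · ν_d(k) ≤ C5 · k^(−3/2). -/
open Real Filter

open Topology in
lemma sqrt_pi_le_stirlingSeq (n : ℕ) (hn : 1 ≤ n) : Real.sqrt π ≤ Stirling.stirlingSeq n := by
  obtain ⟨m, rfl⟩ := Nat.exists_eq_add_of_le hn
  have h : Filter.Tendsto (Stirling.stirlingSeq ∘ Nat.succ) atTop (𝓝 (Real.sqrt π)) := by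
    have := (Filter.tendsto_add_atTop_iff_nat 1).2 Stirling.tendsto_stirlingSeq_sqrt_pi
    exact this
  simpa [Nat.add_comm] using Stirling.stirlingSeq'_antitone.le_of_tendsto h m

lemma stirlingSeq_le_two (n : ℕ) (hn : 1 ≤ n) : Stirling.stirlingSeq n ≤ 2 := by
  obtain ⟨m, rfl⟩ := Nat.exists_eq_add_of_le hn
  have h := Stirling.stirlingSeq'_antitone (Nat.zero_le m)
  simp only [Function.comp] at h
  have h1 : Stirling.stirlingSeq 1 = Real.exp 1 / Real.sqrt 2 := Stirling.stirlingSeq_one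
  have he : Real.exp 1 ≤ 2.7182818286 := Real.exp_one_lt_d9.le
  have hs : (1.414 : ℝ) ≤ Real.sqrt 2 := by
    rw [show (1.414:ℝ) = Real.sqrt (1.414^2) by rw [Real.sqrt_sq]; norm_num]
    exact Real.sqrt_le_sqrt (by norm_num)
  have : Stirling.stirlingSeq (1 + m) ≤ Real.exp 1 / Real.sqrt 2 := by
    simpa [Nat.add_comm, Nat.succ_eq_add_one] using h.trans_eq h1
  refine this.trans ?_
  rw [div_le_iff₀ (by positivity)]
  nlinarith

noncomputable def Fst (n : ℕ) : ℝ := Real.sqrt (2*n) * ((n:ℝ)/Real.exp 1)^n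

lemma Fst_pos (n : ℕ) (hn : 1 ≤ n) : 0 < Fst n := by
  have : (0:ℝ) < n := by exact_mod_cast hn
  unfold Fst; positivity

lemma factorial_lb (n : ℕ) (hn : 1 ≤ n) : Real.sqrt π * Fst n ≤ ((Nat.factorial n : ℕ) : ℝ) := by
  have h := sqrt_pi_le_stirlingSeq n hn
  rw [Stirling.stirlingSeq, show Real.sqrt (2*(n:ℝ)) * ((n:ℝ)/Real.exp 1)^n = Fst n from rfl,
    le_div_iff₀ (Fst_pos n hn)] at h
  exact h

lemma factorial_ub (n : ℕ) (hn : 1 ≤ n) : ((Nat.factorial n : ℕ) : ℝ) ≤ 2 * Fst n := by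
  have h := stirlingSeq_le_two n hn
  rw [Stirling.stirlingSeq, show Real.sqrt (2*(n:ℝ)) * ((n:ℝ)/Real.exp 1)^n = Fst n from rfl,
    div_le_iff₀ (Fst_pos n hn)] at h
  linarith [h]

lemma key_identity (d k : ℕ) (hk : 1 ≤ k) (hd : 1 ≤ d) :
    Fst (k+d) / (Fst k * Fst d) * nuNT d k =
      (Real.sqrt (2*((k:ℝ)+(d:ℝ))) / (Real.sqrt (2*(k:ℝ)) * Real.sqrt (2*(d:ℝ)))) *
      (((k:ℝ)^2 + (k:ℝ)*(d:ℝ) + (d:ℝ)) / ((k:ℝ)^2 * ((k:ℝ)+(d:ℝ)))) := by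
  have ha : (0:ℝ) < k := by exact_mod_cast hk
  have hb : (0:ℝ) < d := by exact_mod_cast hd
  have hs : (0:ℝ) < (k:ℝ) + (d:ℝ) := by linarith
  have he : (0:ℝ) < Real.exp 1 := Real.exp_pos 1
  unfold Fst nuNT
  have hcast : ((k+d : ℕ) : ℝ) = (k:ℝ) + (d:ℝ) := by push_cast; ring
  rw [hcast]
  have h1 : (k:ℝ) ^ ((k:ℝ) - 2) = (k:ℝ) ^ (k:ℕ) / (k:ℝ)^(2:ℕ) := by
    rw [Real.rpow_sub ha, Real.rpow_natCast]
    norm_num [Real.rpow_natCast (k:ℝ) 2]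
  have h2 : ((k:ℝ) + (d:ℝ)) ^ (-((k:ℝ) + (d:ℝ) + 1)) =
      (((k:ℝ)+(d:ℝ)) ^ ((k+d:ℕ)) * ((k:ℝ)+(d:ℝ)))⁻¹ := by
    rw [Real.rpow_neg hs.le, Real.rpow_add hs, Real.rpow_one]
    congr 2
    rw [← Real.rpow_natCast ((k:ℝ)+(d:ℝ)) (k+d), hcast]
  have h3 : (d:ℝ) ^ ((d:ℝ)) = (d:ℝ) ^ (d:ℕ) := Real.rpow_natCast _ d
  rw [h1, h2, h3]
  have hek : ((k:ℝ)/Real.exp 1)^(k:ℕ) = (k:ℝ)^(k:ℕ) / (Real.exp 1)^(k:ℕ) := div_pow _ _ _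
  have hed : ((d:ℝ)/Real.exp 1)^(d:ℕ) = (d:ℝ)^(d:ℕ) / (Real.exp 1)^(d:ℕ) := div_pow _ _ _
  have hes : (((k:ℝ)+(d:ℝ))/Real.exp 1)^((k+d):ℕ) = ((k:ℝ)+(d:ℝ))^((k+d):ℕ) / (Real.exp 1)^((k+d):ℕ) := div_pow _ _ _
  rw [hek, hed, hes, pow_add (Real.exp 1) k d]
  have hsq1 : Real.sqrt (2*(k:ℝ)) ≠ 0 := by positivity
  have hsq2 : Real.sqrt (2*(d:ℝ)) ≠ 0 := by positivity
  have hp1 : ((k:ℝ))^(k:ℕ) ≠ 0 := by positivity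
  have hp2 : ((d:ℝ))^(d:ℕ) ≠ 0 := by positivity
  have hp3 : (((k:ℝ)+(d:ℝ)))^((k+d):ℕ) ≠ 0 := by positivity
  have hpe1 : (Real.exp 1)^(k:ℕ) ≠ 0 := by positivity
  have hpe2 : (Real.exp 1)^(d:ℕ) ≠ 0 := by positivity
  field_simp

lemma nuNT_pos (d k : ℕ) (hk : 1 ≤ k) (hd : 1 ≤ d) : 0 < nuNT d k := by
  have ha : (0:ℝ) < k := by exact_mod_cast hk
  have hb : (0:ℝ) < d := by exact_mod_cast hd
  have hs : (0:ℝ) < (k:ℝ) + (d:ℝ) := by linarith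
  unfold nuNT; positivity
set_option maxHeartbeats 2000000 in
lemma choose_nu_bounds (d k : ℕ) (hk : 1 ≤ k) (hd : 1 ≤ d) (hkd : k ≤ d) :
    (1/9 : ℝ) * (k:ℝ) ^ (-(3/2 : ℝ)) ≤ (((k+d).choose k : ℕ) : ℝ) * nuNT d k ∧
    (((k+d).choose k : ℕ) : ℝ) * nuNT d k ≤ 3 * (k:ℝ) ^ (-(3/2 : ℝ)) := by
  have ha : (1:ℝ) ≤ k := by exact_mod_cast hk
  have hb : (1:ℝ) ≤ d := by exact_mod_cast hd
  have hab : (k:ℝ) ≤ d := by exact_mod_cast hkd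
  have ha0 : (0:ℝ) < k := by linarith
  have hb0 : (0:ℝ) < d := by linarith
  have hs0 : (0:ℝ) < (k:ℝ) + (d:ℝ) := by linarith
  have hc : (((k+d).choose k : ℕ) : ℝ) =
      ((Nat.factorial (k+d) : ℕ) : ℝ) / (((Nat.factorial k : ℕ) : ℝ) * ((Nat.factorial d : ℕ) : ℝ)) := by
    rw [Nat.cast_choose ℝ (Nat.le_add_right k d)]
    congr 2
    simp
  have hFk := Fst_pos k hk
  have hFd := Fst_pos d hd
  have hFs := Fst_pos (k+d) (by omega)
  have hpi1 : (1.7:ℝ) ≤ Real.sqrt π := by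
    rw [show (1.7:ℝ) = Real.sqrt (1.7^2) by rw [Real.sqrt_sq]; norm_num]
    exact Real.sqrt_le_sqrt (by nlinarith [Real.pi_gt_three])
  have hpi0 : (0:ℝ) < Real.sqrt π := by linarith
  have hchoose_lb : Real.sqrt π / 4 * (Fst (k+d) / (Fst k * Fst d)) ≤ (((k+d).choose k : ℕ) : ℝ) := by
    rw [hc]
    have h1 := factorial_lb (k+d) (by omega)
    have h2 := factorial_ub k hk
    have h3 := factorial_ub d hd
    have heq : Real.sqrt π / 4 * (Fst (k+d) / (Fst k * Fst d)) =
        (Real.sqrt π * Fst (k+d)) / ((2 * Fst k) * (2 * Fst d)) := by ring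
    rw [heq]
    gcongr
  have hchoose_ub : (((k+d).choose k : ℕ) : ℝ) ≤ 2/π * (Fst (k+d) / (Fst k * Fst d)) := by
    rw [hc]
    have h1 := factorial_ub (k+d) (by omega)
    have h2 := factorial_lb k hk
    have h3 := factorial_lb d hd
    have heq : 2/π * (Fst (k+d) / (Fst k * Fst d)) =
        (2 * Fst (k+d)) / ((Real.sqrt π * Fst k) * (Real.sqrt π * Fst d)) := by
      rw [show Real.sqrt π * Fst k * (Real.sqrt π * Fst d) = (Real.sqrt π * Real.sqrt π) * (Fst k * Fst d) by ring,
        Real.mul_self_sqrt Real.pi_pos.le]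
      ring
    rw [heq]
    gcongr
  set T : ℝ := Real.sqrt (2*((k:ℝ)+(d:ℝ))) / (Real.sqrt (2*(k:ℝ)) * Real.sqrt (2*(d:ℝ))) with hT
  set Y : ℝ := ((k:ℝ)^2 + (k:ℝ)*(d:ℝ) + (d:ℝ)) / ((k:ℝ)^2 * ((k:ℝ)+(d:ℝ))) with hY
  have hid := key_identity d k hk hd
  have hsqa : Real.sqrt (2*(k:ℝ)) = Real.sqrt 2 * Real.sqrt (k:ℝ) := Real.sqrt_mul (by norm_num) _
  have hsqb : Real.sqrt (2*(d:ℝ)) = Real.sqrt 2 * Real.sqrt (d:ℝ) := Real.sqrt_mul (by norm_num) _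
  have hsa0 : (0:ℝ) < Real.sqrt (k:ℝ) := Real.sqrt_pos.2 ha0
  have hsb0 : (0:ℝ) < Real.sqrt (d:ℝ) := Real.sqrt_pos.2 hb0
  have hs2 : (0:ℝ) < Real.sqrt 2 := by positivity
  have hs2' : Real.sqrt 2 * Real.sqrt 2 = 2 := Real.mul_self_sqrt (by norm_num)
  have hs2hi : Real.sqrt 2 ≤ 1.5 := by
    rw [show (1.5:ℝ) = Real.sqrt (1.5^2) by rw [Real.sqrt_sq]; norm_num]
    exact Real.sqrt_le_sqrt (by norm_num)
  have hT_lo : 1 / (Real.sqrt 2 * Real.sqrt (k:ℝ)) ≤ T := by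
    rw [hT, hsqa, hsqb]
    have hnum : Real.sqrt 2 * Real.sqrt (d:ℝ) ≤ Real.sqrt (2*((k:ℝ)+(d:ℝ))) := by
      rw [← Real.sqrt_mul (by norm_num : (0:ℝ) ≤ 2)]
      exact Real.sqrt_le_sqrt (by nlinarith)
    rw [div_le_div_iff₀ (by positivity) (by positivity)]
    nlinarith [mul_le_mul_of_nonneg_right hnum (by positivity : (0:ℝ) ≤ Real.sqrt 2 * Real.sqrt (k:ℝ)), hs2',
      mul_nonneg hsa0.le hsb0.le]
  have hT_hi : T ≤ 1 / Real.sqrt (k:ℝ) := by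
    rw [hT, hsqa, hsqb]
    have hnum : Real.sqrt (2*((k:ℝ)+(d:ℝ))) ≤ 2 * Real.sqrt (d:ℝ) := by
      rw [show (2:ℝ) * Real.sqrt (d:ℝ) = Real.sqrt (4*(d:ℝ)) by
        rw [show (4:ℝ)*(d:ℝ) = (2*Real.sqrt (d:ℝ))^2 by rw [mul_pow, Real.sq_sqrt hb0.le]; ring,
          Real.sqrt_sq (by positivity)]]
      exact Real.sqrt_le_sqrt (by nlinarith)
    rw [div_le_div_iff₀ (by positivity) (by positivity)]
    nlinarith [mul_le_mul_of_nonneg_right hnum (hsa0.le), hs2',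
      mul_nonneg hsa0.le hsb0.le]
  have hY_lo : 1 / (2*(k:ℝ)) ≤ Y := by
    rw [hY, div_le_div_iff₀ (by positivity) (by positivity)]
    nlinarith
  have hY_hi : Y ≤ 3 / (k:ℝ) := by
    rw [hY, div_le_div_iff₀ (by positivity) (by positivity)]
    have h1 : (k:ℝ)*(d:ℝ) ≤ (k:ℝ)^2*(d:ℝ) := by
      nlinarith [mul_le_mul_of_nonneg_right ha (mul_nonneg ha0.le hb0.le)]
    nlinarith
  have hT0 : 0 < T := lt_of_lt_of_le (by positivity) hT_lo
  have hY0 : 0 < Y := lt_of_lt_of_le (by positivity) hY_lo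
  have hnu := nuNT_pos d k hk hd
  have hks : (k:ℝ) ^ (-(3/2 : ℝ)) = 1 / ((k:ℝ) * Real.sqrt (k:ℝ)) := by
    rw [Real.rpow_neg ha0.le, show (3/2:ℝ) = 1 + 1/2 by norm_num, Real.rpow_add ha0,
      Real.rpow_one, ← Real.sqrt_eq_rpow, one_div]
  constructor
  · calc (1/9 : ℝ) * (k:ℝ) ^ (-(3/2 : ℝ)) = (1/9) * (1 / ((k:ℝ) * Real.sqrt (k:ℝ))) := by rw [hks]
      _ ≤ Real.sqrt π / (8 * Real.sqrt 2) * (1 / ((k:ℝ) * Real.sqrt (k:ℝ))) := by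
          have hconst : (1/9:ℝ) ≤ Real.sqrt π / (8 * Real.sqrt 2) := by
            rw [div_le_div_iff₀ (by norm_num) (by positivity)]
            nlinarith
          exact mul_le_mul_of_nonneg_right hconst (by positivity)
      _ = Real.sqrt π / 4 * (1 / (Real.sqrt 2 * Real.sqrt (k:ℝ)) * (1 / (2*(k:ℝ)))) := by
          field_simp
          ring
      _ ≤ Real.sqrt π / 4 * (T * Y) := by
          have h1 : 1 / (Real.sqrt 2 * Real.sqrt (k:ℝ)) * (1 / (2*(k:ℝ))) ≤ T * Y :=
            mul_le_mul hT_lo hY_lo (by positivity) hT0.le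
          nlinarith
      _ = Real.sqrt π / 4 * (Fst (k+d) / (Fst k * Fst d)) * nuNT d k := by rw [← hid]; ring
      _ ≤ (((k+d).choose k : ℕ) : ℝ) * nuNT d k := by gcongr
  · calc (((k+d).choose k : ℕ) : ℝ) * nuNT d k ≤ 2/π * (Fst (k+d) / (Fst k * Fst d)) * nuNT d k := by gcongr
      _ = 2/π * (T * Y) := by rw [mul_assoc, hid]
      _ ≤ 2/π * (1 / Real.sqrt (k:ℝ) * (3 / (k:ℝ))) := by
          have h1 : T * Y ≤ 1 / Real.sqrt (k:ℝ) * (3 / (k:ℝ)) :=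
            mul_le_mul hT_hi hY_hi hY0.le (by positivity)
          have h2 : (0:ℝ) < 2/π := by positivity
          nlinarith
      _ ≤ 3 * (k:ℝ) ^ (-(3/2 : ℝ)) := by
          rw [hks, show (2:ℝ)/π * (1 / Real.sqrt (k:ℝ) * (3 / (k:ℝ))) = 6/π * (1/((k:ℝ)*Real.sqrt (k:ℝ))) by
            field_simp; ring]
          gcongr
          rw [div_le_iff₀ Real.pi_pos]
          nlinarith [Real.pi_gt_three]

lemma rpow_d_bounds {d : ℕ} (hd : 2^50 ≤ d) : (2:ℝ) ≤ (d:ℝ)^(0.02:ℝ) := by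
  have hb : (1:ℝ) ≤ d := by
    have : (1:ℕ) ≤ d := le_trans (by norm_num) hd
    exact_mod_cast this
  have h2d : ((2:ℝ)^(50:ℕ)) ≤ (d:ℝ) := by exact_mod_cast hd
  calc (2:ℝ) = ((2:ℝ)^(50:ℕ))^(0.02:ℝ) := by
        rw [← Real.rpow_natCast 2 50, ← Real.rpow_mul (by norm_num)]
        norm_num
    _ ≤ (d:ℝ)^(0.02:ℝ) := Real.rpow_le_rpow (by positivity) h2d (by norm_num)

set_option maxHeartbeats 1000000 in
/-- Absolute constants C4, C5 > 0 and D such that for all d ≥ D and 1 ≤ k ≤ d^0.99: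
C4·k^(−3/2) ≤ N(d,k)·ν_d(k) ≤ C5·k^(−3/2). -/
theorem Nsph_mul_nuNT_bounds_small_k :
    ∃ C4 C5 : ℝ, 0 < C4 ∧ 0 < C5 ∧ ∃ D : ℕ, ∀ d : ℕ, D ≤ d →
      ∀ k : ℕ, 1 ≤ k → (k : ℝ) ≤ (d : ℝ) ^ (0.99 : ℝ) →
        C4 * (k : ℝ) ^ (-(3 / 2 : ℝ)) ≤ (Nsph d k : ℝ) * nuNT d k ∧
        (Nsph d k : ℝ) * nuNT d k ≤ C5 * (k : ℝ) ^ (-(3 / 2 : ℝ)) := by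
  refine ⟨1/18, 3, by norm_num, by norm_num, 2^50, fun d hd k hk hk99 => ?_⟩
  have hd1 : 1 ≤ d := le_trans (by norm_num) hd
  have hb1 : (1:ℝ) ≤ d := by exact_mod_cast hd1
  have hb0 : (0:ℝ) < d := by linarith
  have ha0 : (0:ℝ) < k := by exact_mod_cast hk
  -- k ≤ d
  have hkdR : (k:ℝ) ≤ (d:ℝ) := by
    calc (k:ℝ) ≤ (d:ℝ)^(0.99:ℝ) := hk99
      _ ≤ (d:ℝ)^(1:ℝ) := Real.rpow_le_rpow_of_exponent_le hb1 (by norm_num)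
      _ = (d:ℝ) := Real.rpow_one _
  have hkd : k ≤ d := by exact_mod_cast hkdR
  obtain ⟨hlow, hup⟩ := choose_nu_bounds d k hk hd1 hkd
  have hnu := nuNT_pos d k hk hd1
  have hrpos : (0:ℝ) < (k:ℝ) ^ (-(3/2 : ℝ)) := Real.rpow_pos_of_pos ha0 _
  rcases Nat.lt_or_ge k 2 with hk2 | hk2
  · -- k = 1
    have hk1 : k = 1 := by omega
    subst hk1
    have hN : (Nsph d 1 : ℝ) = (((1+d).choose 1 : ℕ) : ℝ) := by
      unfold Nsph
      norm_num
    rw [hN]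
    exact ⟨le_trans (by linarith [hrpos]) hlow, hup⟩
  · -- k ≥ 2
    obtain ⟨j, rfl⟩ : ∃ j, k = j + 2 := ⟨k - 2, by omega⟩
    set k := j + 2 with hkdef
    have hNsph : Nsph d k = (k+d).choose k - (j+d).choose j := by
      unfold Nsph
      have h1 : ¬ (k = 0) := by omega
      have h2 : 2 ≤ k := by omega
      have h3 : k + d - 2 = j + d := by omega
      have h4 : k - 2 = j := by omega
      simp [h1, h2, h3, h4]
    -- monotonicity of choose along the diagonal
    have hmono : (j+d).choose j ≤ (k+d).choose k := by
      have s1 : (j+d).choose j ≤ (j+d+1).choose (j+1) := by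
        rw [Nat.choose_succ_succ]; exact Nat.le_add_right _ _
      have s2 : (j+d+1).choose (j+1) ≤ (j+d+2).choose (j+2) := by
        rw [Nat.choose_succ_succ]; exact Nat.le_add_right _ _
      calc (j+d).choose j ≤ (j+d+1).choose (j+1) := s1
        _ ≤ (j+d+2).choose (j+2) := s2
        _ = (k+d).choose k := by
          have h5 : k + d = j + d + 2 := by omega
          rw [h5, hkdef]
    have hcastN : (Nsph d k : ℝ) = (((k+d).choose k : ℕ) : ℝ) - (((j+d).choose j : ℕ) : ℝ) := by
      rw [hNsph, Nat.cast_sub hmono]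
    -- ratio identity
    have e1 : (j+d+1) * ((j+d).choose j) = (j+d+1).choose (j+1) * (j+1) := by
      have := Nat.add_one_mul_choose_eq (j+d) j
      simpa [Nat.succ_eq_add_one] using this
    have e2 : (j+d+2) * ((j+d+1).choose (j+1)) = (j+d+2).choose (j+2) * (j+2) := by
      have := Nat.add_one_mul_choose_eq (j+d+1) (j+1)
      simpa [Nat.succ_eq_add_one, show j+d+1+1 = j+d+2 from rfl] using this
    have eN : (j+d+2) * ((j+d+1) * ((j+d).choose j)) = (j+d+2).choose (j+2) * ((j+2)*(j+1)) := by
      rw [e1]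
      calc (j+d+2) * ((j+d+1).choose (j+1) * (j+1))
          = ((j+d+2) * ((j+d+1).choose (j+1))) * (j+1) := by ring
        _ = ((j+d+2).choose (j+2) * (j+2)) * (j+1) := by rw [e2]
        _ = (j+d+2).choose (j+2) * ((j+2)*(j+1)) := by ring
    have eNR : ((j+d+2:ℕ):ℝ) * ((j+d+1:ℕ):ℝ) * (((j+d).choose j : ℕ):ℝ)
        = (((k+d).choose k : ℕ):ℝ) * (((j+2:ℕ):ℝ) * ((j+1:ℕ):ℝ)) := by
      have hcc : ((k+d).choose k) = ((j+d+2).choose (j+2)) := by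
        have h5 : k + d = j + d + 2 := by omega
        rw [h5, hkdef]
      rw [hcc]
      have eN2 : (j+d+2) * (j+d+1) * ((j+d).choose j)
          = ((j+d+2).choose (j+2)) * ((j+2) * (j+1)) := by rw [mul_assoc]; exact eN
      exact_mod_cast eN2
    -- numeric bound : (j+1)(j+2) ≤ d^2/2
    have hkk : ((k:ℝ))^2 ≤ (d:ℝ)^(1.98:ℝ) := by
      calc ((k:ℝ))^2 ≤ ((d:ℝ)^(0.99:ℝ))^2 := pow_le_pow_left₀ ha0.le hk99 2
        _ = (d:ℝ)^(1.98:ℝ) := by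
          rw [← Real.rpow_natCast ((d:ℝ)^(0.99:ℝ)) 2, ← Real.rpow_mul hb0.le]
          norm_num
    have hd02 := rpow_d_bounds hd
    have h198 : (d:ℝ)^(1.98:ℝ) * 2 ≤ (d:ℝ)^2 := by
      calc (d:ℝ)^(1.98:ℝ) * 2 ≤ (d:ℝ)^(1.98:ℝ) * (d:ℝ)^(0.02:ℝ) :=
          mul_le_mul_of_nonneg_left hd02 (Real.rpow_nonneg hb0.le _)
        _ = (d:ℝ)^2 := by
          rw [← Real.rpow_add hb0, ← Real.rpow_natCast (d:ℝ) 2]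
          norm_num
    -- C2 ≤ C/2
    have hC2 : (((j+d).choose j : ℕ):ℝ) ≤ (((k+d).choose k : ℕ):ℝ) / 2 := by
      have hD1 : (0:ℝ) < ((j+d+2:ℕ):ℝ) * ((j+d+1:ℕ):ℝ) := by positivity
      have hnum : ((j+2:ℕ):ℝ) * ((j+1:ℕ):ℝ) * 2 ≤ ((j+d+2:ℕ):ℝ) * ((j+d+1:ℕ):ℝ) := by
        have hjk : ((j+2:ℕ):ℝ) = (k:ℝ) := by rw [hkdef]
        have h1 : ((j+2:ℕ):ℝ) * ((j+1:ℕ):ℝ) ≤ ((k:ℝ))^2 := by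
          rw [hjk]; push_cast; nlinarith [show (j:ℝ) + 2 = k by exact_mod_cast hkdef.symm]
        have h2 : (d:ℝ)^2 ≤ ((j+d+2:ℕ):ℝ) * ((j+d+1:ℕ):ℝ) := by
          push_cast; nlinarith
        nlinarith
      have hCpos : (0:ℝ) ≤ (((k+d).choose k : ℕ):ℝ) := by positivity
      rw [le_div_iff₀ (by norm_num : (0:ℝ) < 2), ← mul_le_mul_iff_right₀ hD1]
      calc ((j+d+2:ℕ):ℝ) * ((j+d+1:ℕ):ℝ) * ((((j+d).choose j : ℕ):ℝ) * 2)
          = (((j+d+2:ℕ):ℝ) * ((j+d+1:ℕ):ℝ) * (((j+d).choose j : ℕ):ℝ)) * 2 := by ring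
        _ = (((k+d).choose k : ℕ):ℝ) * (((j+2:ℕ):ℝ) * ((j+1:ℕ):ℝ)) * 2 := by rw [eNR]
        _ = (((k+d).choose k : ℕ):ℝ) * (((j+2:ℕ):ℝ) * ((j+1:ℕ):ℝ) * 2) := by ring
        _ ≤ (((k+d).choose k : ℕ):ℝ) * (((j+d+2:ℕ):ℝ) * ((j+d+1:ℕ):ℝ)) :=
            mul_le_mul_of_nonneg_left hnum hCpos
        _ = ((j+d+2:ℕ):ℝ) * ((j+d+1:ℕ):ℝ) * (((k+d).choose k : ℕ):ℝ) := by ring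
    rw [hcastN]
    have hC2nn : (0:ℝ) ≤ (((j+d).choose j : ℕ):ℝ) := by positivity
    constructor
    · calc (1/18 : ℝ) * (k:ℝ) ^ (-(3/2 : ℝ))
          = (1/2) * ((1/9 : ℝ) * (k:ℝ) ^ (-(3/2 : ℝ))) := by ring
        _ ≤ (1/2) * ((((k+d).choose k : ℕ):ℝ) * nuNT d k) := by gcongr
        _ = ((((k+d).choose k : ℕ):ℝ) - (((k+d).choose k : ℕ):ℝ)/2) * nuNT d k := by ring
        _ ≤ ((((k+d).choose k : ℕ):ℝ) - (((j+d).choose j : ℕ):ℝ)) * nuNT d k := by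
            gcongr
    · calc ((((k+d).choose k : ℕ):ℝ) - (((j+d).choose j : ℕ):ℝ)) * nuNT d k
          ≤ (((k+d).choose k : ℕ):ℝ) * nuNT d k := by
            apply mul_le_mul_of_nonneg_right _ hnu.le
            linarith
        _ ≤ 3 * (k:ℝ) ^ (-(3/2 : ℝ)) := hup
end

section
/- There exist an absolute constant C > 0 and an absolute constant D such that for every integer d ≥ D and every integer k ≥ d^(1.01): N(d,k) · ν_d(k) ≤ C · d^(1/2) · k^(−2). -/
open Real Filter

section Aux
open Nat


lemma stirling_ge (n : ℕ) (hn : 1 ≤ n) :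
    Real.sqrt (2*n) * ((n:ℝ)/Real.exp 1)^n ≤ (n ! : ℝ) := by
  obtain ⟨m, rfl⟩ := Nat.exists_eq_add_of_le hn
  have h1 : Real.sqrt π ≤ Stirling.stirlingSeq (1 + m) := by
    have := Antitone.le_of_tendsto Stirling.stirlingSeq'_antitone
      (Stirling.tendsto_stirlingSeq_sqrt_pi.comp (Filter.tendsto_add_atTop_nat 1)) m
    simpa [Nat.succ_eq_add_one, Nat.add_comm] using this
  have h2 : (1:ℝ) ≤ Real.sqrt π := by
    rw [show (1:ℝ) = Real.sqrt 1 by simp]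
    exact Real.sqrt_le_sqrt (by linarith [Real.pi_gt_three])
  have hpos : (0:ℝ) < Real.sqrt (2*(1+m)) * (((1+m:ℕ):ℝ)/Real.exp 1)^(1+m) := by
    positivity
  have hfact : ((1+m) ! : ℝ) =
      Stirling.stirlingSeq (1+m) * (Real.sqrt (2*(1+m)) * (((1+m:ℕ):ℝ)/Real.exp 1)^(1+m)) := by
    rw [Stirling.stirlingSeq]
    field_simp
    rw [Nat.cast_add, Nat.cast_one]
  rw [hfact]
  push_cast
  push_cast at hpos
  nlinarith [mul_le_mul_of_nonneg_right (le_trans h2 h1) (le_of_lt hpos)]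

lemma stirling_le (n : ℕ) (hn : 1 ≤ n) :
    (n ! : ℝ) ≤ (Real.exp 1 / Real.sqrt 2) * (Real.sqrt (2*n) * ((n:ℝ)/Real.exp 1)^n) := by
  obtain ⟨m, rfl⟩ := Nat.exists_eq_add_of_le hn
  have h1 : Stirling.stirlingSeq (1 + m) ≤ Real.exp 1 / Real.sqrt 2 := by
    have := Stirling.stirlingSeq'_antitone (Nat.zero_le m)
    simpa [Nat.succ_eq_add_one, Nat.add_comm, Stirling.stirlingSeq_one] using this
  have hpos : (0:ℝ) < Real.sqrt (2*(1+m)) * (((1+m:ℕ):ℝ)/Real.exp 1)^(1+m) := by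
    positivity
  have hfact : ((1+m) ! : ℝ) =
      Stirling.stirlingSeq (1+m) * (Real.sqrt (2*(1+m)) * (((1+m:ℕ):ℝ)/Real.exp 1)^(1+m)) := by
    rw [Stirling.stirlingSeq]
    field_simp
    rw [Nat.cast_add, Nat.cast_one]
  rw [hfact]
  push_cast
  push_cast at hpos
  nlinarith [mul_le_mul_of_nonneg_right h1 (le_of_lt hpos)]


lemma choose_ident (d m : ℕ) :
    (m+d+2)*(m+d+1) * ((m+d).choose m) = (m+2)*(m+1) * ((m+d+2).choose (m+2)) := by
  have h1 : (m+d+1) * ((m+d).choose m) = ((m+d+1).choose (m+1)) * (m+1) := by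
    simpa [Nat.succ_eq_add_one] using Nat.add_one_mul_choose_eq (m+d) m
  have h2 : (m+d+2) * ((m+d+1).choose (m+1)) = ((m+d+2).choose (m+2)) * (m+2) := by
    simpa [Nat.succ_eq_add_one] using Nat.add_one_mul_choose_eq (m+d+1) (m+1)
  calc (m+d+2)*(m+d+1) * ((m+d).choose m)
      = (m+d+2) * ((m+d+1) * ((m+d).choose m)) := by ring
    _ = (m+d+2) * (((m+d+1).choose (m+1)) * (m+1)) := by rw [h1]
    _ = ((m+d+2) * ((m+d+1).choose (m+1))) * (m+1) := by ring
    _ = (((m+d+2).choose (m+2)) * (m+2)) * (m+1) := by rw [h2]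
    _ = (m+2)*(m+1) * ((m+d+2).choose (m+2)) := by ring

lemma choose_sub_le (d m : ℕ) : (m+d).choose m ≤ (m+d+2).choose (m+2) := by
  have h := choose_ident d m
  have hle : (m+2)*(m+1) ≤ (m+d+2)*(m+d+1) :=
    Nat.mul_le_mul (by omega) (by omega)
  have h2 : (m+d+2)*(m+d+1) * ((m+d).choose m) ≤ (m+d+2)*(m+d+1) * ((m+d+2).choose (m+2)) := by
    rw [h]; exact Nat.mul_le_mul hle le_rfl
  exact Nat.le_of_mul_le_mul_left h2 (by positivity)

lemma Nsph_le (d k : ℕ) (hd : 1 ≤ d) (hk : 2 ≤ k) (hdk : d ≤ k) :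
    (Nsph d k : ℝ) ≤ 3 * d / k * ((k+d).choose k : ℝ) := by
  obtain ⟨m, rfl⟩ : ∃ m, k = m + 2 := ⟨k - 2, by omega⟩
  have hN : Nsph d (m+2) = (m+d+2).choose (m+2) - (m+d).choose m := by
    simp only [Nsph, if_neg (by omega : ¬ m+2 = 0), if_pos (by omega : 2 ≤ m+2)]
    congr 2 <;> omega
  rw [hN, Nat.cast_sub (choose_sub_le d m)]
  have hid : ((m+d+2 : ℕ):ℝ)*((m+d+1:ℕ):ℝ) * (((m+d).choose m : ℕ):ℝ)
      = ((m+2:ℕ):ℝ)*((m+1:ℕ):ℝ) * (((m+d+2).choose (m+2) : ℕ):ℝ) := by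
    exact_mod_cast congrArg (Nat.cast (R := ℝ)) (choose_ident d m)
  set A : ℝ := (((m+d+2).choose (m+2) : ℕ):ℝ) with hA
  set B : ℝ := (((m+d).choose m : ℕ):ℝ) with hB
  have hx : ((m+2+d : ℕ):ℝ) = (m:ℝ) + d + 2 := by push_cast; ring
  have hcongr : (((m+2+d).choose (m+2) : ℕ):ℝ) = A := by
    rw [hA]; congr 2; omega
  rw [hcongr]
  push_cast at hid ⊢
  have hA0 : 0 ≤ A := Nat.cast_nonneg _
  have hd' : (1:ℝ) ≤ d := by exact_mod_cast hd
  have hdk' : (d:ℝ) ≤ (m:ℝ) + 2 := by exact_mod_cast (by omega : d ≤ m + 2)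
  have hm0 : (0:ℝ) ≤ m := Nat.cast_nonneg _
  rw [div_mul_eq_mul_div, le_div_iff₀ (by positivity)]
  have hP : (0:ℝ) < ((m:ℝ)+(d:ℝ)+2)*((m:ℝ)+(d:ℝ)+1) := by positivity
  have hid2 : ((m:ℝ)+2) * (((m:ℝ)+(d:ℝ)+2)*((m:ℝ)+(d:ℝ)+1)*B)
      = ((m:ℝ)+2) * (((m:ℝ)+2)*((m:ℝ)+1)*A) := by
    rw [show ((m:ℝ)+(d:ℝ)+2)*((m:ℝ)+(d:ℝ)+1)*B = ((m:ℝ)+2)*((m:ℝ)+1)*A from by linarith [hid]]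
  have ht1 : (0:ℝ) ≤ A * ((m:ℝ)+2) * (d:ℝ) * (m:ℝ) := by positivity
  have ht2 : (0:ℝ) ≤ A * ((m:ℝ)+2) * (d:ℝ)^2 := by positivity
  have ht3 : (0:ℝ) ≤ A * (d:ℝ)^2 * ((d:ℝ)-1) := by
    apply mul_nonneg (by positivity); linarith
  have hkey : ((A - B) * ((m:ℝ)+2)) * (((m:ℝ)+(d:ℝ)+2)*((m:ℝ)+(d:ℝ)+1))
      ≤ (3*(d:ℝ)*A) * (((m:ℝ)+(d:ℝ)+2)*((m:ℝ)+(d:ℝ)+1)) := by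
    nlinarith [hid2, ht1, ht2, ht3]
  exact le_of_mul_le_mul_right hkey hP

lemma choose_le_stirling (d k : ℕ) (hd : 1 ≤ d) (hk : 1 ≤ k) (hdk : d ≤ k) :
    (((k+d).choose k : ℕ) : ℝ) ≤ (Real.exp 1 / Real.sqrt 2) * (d:ℝ)^(-(1/2:ℝ)) *
      (((k:ℝ)+(d:ℝ))^((k:ℝ)+(d:ℝ)) * (k:ℝ)^(-(k:ℝ)) * (d:ℝ)^(-(d:ℝ))) := by
  have hx0 : (0:ℝ) < k := by exact_mod_cast hk
  have hy0 : (0:ℝ) < d := by exact_mod_cast hd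
  have hxy0 : (0:ℝ) < (k:ℝ) + d := by linarith
  have hkd' : (d:ℝ) ≤ (k:ℝ) := by exact_mod_cast hdk
  have hcast : (((k+d).choose k : ℕ) : ℝ) = ((k+d)! : ℝ) / ((k ! : ℝ) * (d ! : ℝ)) := by
    rw [Nat.cast_choose ℝ (Nat.le_add_right k d), Nat.add_sub_cancel_left]
  have h1 := stirling_le (k+d) (by omega)
  push_cast at h1
  have h2 := stirling_ge k hk
  have h3 := stirling_ge d hd
  have hlk : (0:ℝ) < Real.sqrt (2*k) * ((k:ℝ)/Real.exp 1)^k := by positivity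
  have hld : (0:ℝ) < Real.sqrt (2*d) * ((d:ℝ)/Real.exp 1)^d := by positivity
  have step1 : (((k+d).choose k : ℕ) : ℝ) ≤
      ((Real.exp 1 / Real.sqrt 2) * (Real.sqrt (2*((k:ℝ)+(d:ℝ))) * (((k:ℝ)+(d:ℝ))/Real.exp 1)^(k+d))) /
        ((Real.sqrt (2*k) * ((k:ℝ)/Real.exp 1)^k) * (Real.sqrt (2*d) * ((d:ℝ)/Real.exp 1)^d)) := by
    rw [hcast]
    apply div_le_div₀ (by positivity) h1 (by positivity)
    exact mul_le_mul h2 h3 hld.le (Nat.cast_nonneg _)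
  refine step1.trans ?_
  -- now pure real computation
  have c1 : (((k:ℝ)+(d:ℝ))/Real.exp 1)^(k+d) =
      ((k:ℝ)+(d:ℝ))^((k:ℝ)+(d:ℝ)) / Real.exp ((k:ℝ)+(d:ℝ)) := by
    rw [← Real.rpow_natCast (((k:ℝ)+(d:ℝ))/Real.exp 1) (k+d),
      Real.div_rpow (by positivity) (Real.exp_pos 1).le, Real.exp_one_rpow]
    push_cast
    ring_nf
  have c2 : ((k:ℝ)/Real.exp 1)^k = (k:ℝ)^((k:ℝ)) / Real.exp (k:ℝ) := by
    rw [← Real.rpow_natCast ((k:ℝ)/Real.exp 1) k,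
      Real.div_rpow (by positivity) (Real.exp_pos 1).le, Real.exp_one_rpow]
  have c3 : ((d:ℝ)/Real.exp 1)^d = (d:ℝ)^((d:ℝ)) / Real.exp (d:ℝ) := by
    rw [← Real.rpow_natCast ((d:ℝ)/Real.exp 1) d,
      Real.div_rpow (by positivity) (Real.exp_pos 1).le, Real.exp_one_rpow]
  have hs : Real.sqrt (2*((k:ℝ)+(d:ℝ))) / (Real.sqrt (2*k) * Real.sqrt (2*d))
      ≤ (d:ℝ)^(-(1/2:ℝ)) := by
    have hnum : Real.sqrt (2*((k:ℝ)+(d:ℝ))) ≤ 2 * Real.sqrt (k:ℝ) := by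
      rw [show (2:ℝ) * Real.sqrt (k:ℝ) = Real.sqrt 4 * Real.sqrt (k:ℝ) by
        rw [show (4:ℝ) = 2^2 by norm_num, Real.sqrt_sq (by norm_num)],
        ← Real.sqrt_mul (by norm_num)]
      apply Real.sqrt_le_sqrt
      push_cast
      linarith
    have hden : Real.sqrt (2*(k:ℝ)) * Real.sqrt (2*(d:ℝ)) =
        2 * Real.sqrt (k:ℝ) * Real.sqrt (d:ℝ) := by
      rw [Real.sqrt_mul (by norm_num), Real.sqrt_mul (by norm_num),
        show Real.sqrt 2 * Real.sqrt (k:ℝ) * (Real.sqrt 2 * Real.sqrt (d:ℝ))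
          = (Real.sqrt 2 * Real.sqrt 2) * (Real.sqrt (k:ℝ) * Real.sqrt (d:ℝ)) by ring,
        Real.mul_self_sqrt (by norm_num)]
      ring
    rw [Real.rpow_neg hy0.le, ← Real.sqrt_eq_rpow]
    have hsk : (0:ℝ) < Real.sqrt (k:ℝ) := Real.sqrt_pos.mpr hx0
    have hsd : (0:ℝ) < Real.sqrt (d:ℝ) := Real.sqrt_pos.mpr hy0
    rw [div_le_iff₀ (by rw [hden]; positivity)]
    calc Real.sqrt (2*((k:ℝ)+(d:ℝ))) ≤ 2 * Real.sqrt (k:ℝ) := hnum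
      _ = (Real.sqrt (d:ℝ))⁻¹ * (2 * Real.sqrt (k:ℝ) * Real.sqrt (d:ℝ)) := by
          field_simp
      _ = (Real.sqrt (d:ℝ))⁻¹ * (Real.sqrt (2*(k:ℝ)) * Real.sqrt (2*(d:ℝ))) := by rw [hden]
  -- put it together
  have hexp : Real.exp ((k:ℝ)) * Real.exp ((d:ℝ)) = Real.exp ((k:ℝ)+(d:ℝ)) :=
    (Real.exp_add _ _).symm
  rw [c1, c2, c3]
  have hrw : (Real.exp 1 / Real.sqrt 2) *
      (Real.sqrt (2*((k:ℝ)+(d:ℝ))) * (((k:ℝ)+(d:ℝ))^((k:ℝ)+(d:ℝ)) / Real.exp ((k:ℝ)+(d:ℝ)))) /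
      ((Real.sqrt (2*k) * ((k:ℝ)^((k:ℝ)) / Real.exp (k:ℝ))) *
       (Real.sqrt (2*d) * ((d:ℝ)^((d:ℝ)) / Real.exp (d:ℝ))))
      = (Real.exp 1 / Real.sqrt 2) *
        (Real.sqrt (2*((k:ℝ)+(d:ℝ))) / (Real.sqrt (2*(k:ℝ)) * Real.sqrt (2*(d:ℝ)))) *
        (((k:ℝ)+(d:ℝ))^((k:ℝ)+(d:ℝ)) * (k:ℝ)^(-(k:ℝ)) * (d:ℝ)^(-(d:ℝ))) := by
    rw [Real.rpow_neg hx0.le, Real.rpow_neg hy0.le, ← hexp]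
    have e1 : Real.exp ((k:ℝ)) ≠ 0 := Real.exp_ne_zero _
    have e2 : Real.exp ((d:ℝ)) ≠ 0 := Real.exp_ne_zero _
    have e3 : (k:ℝ)^((k:ℝ)) ≠ 0 := by positivity
    have e4 : (d:ℝ)^((d:ℝ)) ≠ 0 := by positivity
    have e5 : Real.sqrt (2*(k:ℝ)) ≠ 0 := by positivity
    have e6 : Real.sqrt (2*(d:ℝ)) ≠ 0 := by positivity
    field_simp
  push_cast at hrw ⊢
  rw [hrw]
  have hnn : (0:ℝ) ≤ ((k:ℝ)+(d:ℝ))^((k:ℝ)+(d:ℝ)) * (k:ℝ)^(-(k:ℝ)) * (d:ℝ)^(-(d:ℝ)) := by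
    positivity
  have hc : (0:ℝ) ≤ Real.exp 1 / Real.sqrt 2 := by positivity
  calc (Real.exp 1 / Real.sqrt 2) *
        (Real.sqrt (2*((k:ℝ)+(d:ℝ))) / (Real.sqrt (2*(k:ℝ)) * Real.sqrt (2*(d:ℝ)))) *
        (((k:ℝ)+(d:ℝ))^((k:ℝ)+(d:ℝ)) * (k:ℝ)^(-(k:ℝ)) * (d:ℝ)^(-(d:ℝ)))
      ≤ (Real.exp 1 / Real.sqrt 2) * (d:ℝ)^(-(1/2:ℝ)) *
        (((k:ℝ)+(d:ℝ))^((k:ℝ)+(d:ℝ)) * (k:ℝ)^(-(k:ℝ)) * (d:ℝ)^(-(d:ℝ))) := by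
        apply mul_le_mul_of_nonneg_right _ hnn
        apply mul_le_mul_of_nonneg_left _ hc
        push_cast at hs
        exact hs

end Aux

/-- An absolute constant C > 0 and D such that for all d ≥ D and all integers k ≥ d^1.01:
N(d,k)·ν_d(k) ≤ C·d^(1/2)·k^(−2). -/
theorem Nsph_mul_nuNT_bound_large_k :
    ∃ C : ℝ, 0 < C ∧ ∃ D : ℕ, ∀ d : ℕ, D ≤ d →
      ∀ k : ℕ, (d : ℝ) ^ (1.01 : ℝ) ≤ (k : ℝ) →
        (Nsph d k : ℝ) * nuNT d k ≤ C * (d : ℝ) ^ (1 / 2 : ℝ) * (k : ℝ) ^ (-(2 : ℝ)) := by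
  refine ⟨12, by norm_num, 2, fun d hd k hk => ?_⟩
  have hd1 : (1:ℝ) ≤ (d:ℝ) := by exact_mod_cast le_trans (by norm_num) hd
  have hkd' : (d:ℝ) ≤ (k:ℝ) := by
    calc (d:ℝ) = (d:ℝ)^(1:ℝ) := (Real.rpow_one _).symm
      _ ≤ (d:ℝ)^(1.01:ℝ) := Real.rpow_le_rpow_of_exponent_le hd1 (by norm_num)
      _ ≤ (k:ℝ) := hk
  have hdk : d ≤ k := by exact_mod_cast hkd'
  have hk2 : 2 ≤ k := le_trans hd hdk
  have hd1' : 1 ≤ d := le_trans (by norm_num) hd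
  have hx0 : (0:ℝ) < (k:ℝ) := by exact_mod_cast (by omega : 0 < k)
  have hy0 : (0:ℝ) < (d:ℝ) := by linarith
  have hxy0 : (0:ℝ) < (k:ℝ) + (d:ℝ) := by linarith
  have hQ0 : (0:ℝ) ≤ (k:ℝ)^2 + (k:ℝ)*(d:ℝ) + (d:ℝ) := by positivity
  have hnu0 : 0 ≤ nuNT d k := by
    unfold nuNT
    positivity
  have hstep1 := Nsph_le d k hd1' hk2 hdk
  have hstep2 := choose_le_stirling d k hd1' (by omega) hdk
  have hfac0 : (0:ℝ) ≤ 3 * (d:ℝ) / (k:ℝ) := by positivity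
  calc (Nsph d k : ℝ) * nuNT d k
      ≤ (3 * (d:ℝ) / (k:ℝ) * (((k+d).choose k : ℕ):ℝ)) * nuNT d k :=
        mul_le_mul_of_nonneg_right hstep1 hnu0
    _ ≤ (3 * (d:ℝ) / (k:ℝ) * ((Real.exp 1 / Real.sqrt 2) * (d:ℝ)^(-(1/2:ℝ)) *
          (((k:ℝ)+(d:ℝ))^((k:ℝ)+(d:ℝ)) * (k:ℝ)^(-(k:ℝ)) * (d:ℝ)^(-(d:ℝ))))) * nuNT d k := by
        apply mul_le_mul_of_nonneg_right _ hnu0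
        exact mul_le_mul_of_nonneg_left hstep2 hfac0
    _ = 3 * (Real.exp 1 / Real.sqrt 2) * ((d:ℝ) * (d:ℝ)^(-(1/2:ℝ))) *
          ((d:ℝ)^(-(d:ℝ)) * (d:ℝ)^((d:ℝ))) *
          ((k:ℝ)^(-(k:ℝ)) * (k:ℝ)^((k:ℝ)-2)) *
          (((k:ℝ)+(d:ℝ))^((k:ℝ)+(d:ℝ)) * ((k:ℝ)+(d:ℝ))^(-((k:ℝ)+(d:ℝ)+1))) *
          (((k:ℝ)^2 + (k:ℝ)*(d:ℝ) + (d:ℝ)) / (k:ℝ)) := by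
        unfold nuNT
        field_simp
    _ = 3 * (Real.exp 1 / Real.sqrt 2) * (d:ℝ)^(1/2:ℝ) * (k:ℝ)^(-(2:ℝ)) *
          (((k:ℝ)^2 + (k:ℝ)*(d:ℝ) + (d:ℝ)) / ((k:ℝ) * ((k:ℝ)+(d:ℝ)))) := by
        rw [show (d:ℝ) * (d:ℝ)^(-(1/2:ℝ)) = (d:ℝ)^(1/2:ℝ) by
            nth_rewrite 1 [show (d:ℝ) = (d:ℝ)^(1:ℝ) from (Real.rpow_one _).symm]
            rw [← Real.rpow_add hy0]; norm_num,
          show (d:ℝ)^(-(d:ℝ)) * (d:ℝ)^((d:ℝ)) = 1 by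
            rw [← Real.rpow_add hy0]; simp,
          show (k:ℝ)^(-(k:ℝ)) * (k:ℝ)^((k:ℝ)-2) = (k:ℝ)^(-(2:ℝ)) by
            rw [← Real.rpow_add hx0]; ring_nf,
          show ((k:ℝ)+(d:ℝ))^((k:ℝ)+(d:ℝ)) * ((k:ℝ)+(d:ℝ))^(-((k:ℝ)+(d:ℝ)+1))
              = ((k:ℝ)+(d:ℝ))^(-(1:ℝ)) by
            rw [← Real.rpow_add hxy0]; ring_nf,
          Real.rpow_neg_one]
        field_simp
    _ ≤ 12 * (d:ℝ)^(1/2:ℝ) * (k:ℝ)^(-(2:ℝ)) := by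
        have hq : ((k:ℝ)^2 + (k:ℝ)*(d:ℝ) + (d:ℝ)) / ((k:ℝ) * ((k:ℝ)+(d:ℝ))) ≤ 2 := by
          rw [div_le_iff₀ (by positivity)]
          nlinarith [hkd', hx0, hy0, mul_pos hx0 hy0, sq_nonneg ((k:ℝ))]
        have he : Real.exp 1 / Real.sqrt 2 ≤ 2 := by
          rw [div_le_iff₀ (by positivity : (0:ℝ) < Real.sqrt 2)]
          have h2 : (1.41:ℝ) ≤ Real.sqrt 2 := by
            rw [show (1.41:ℝ) = Real.sqrt (1.41^2) by
              rw [Real.sqrt_sq (by norm_num)]]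
            exact Real.sqrt_le_sqrt (by norm_num)
          have h3 := Real.exp_one_lt_d9
          linarith
        have hpos : (0:ℝ) ≤ (d:ℝ)^(1/2:ℝ) * (k:ℝ)^(-(2:ℝ)) := by positivity
        have hcomb : 3 * (Real.exp 1 / Real.sqrt 2) *
            (((k:ℝ)^2 + (k:ℝ)*(d:ℝ) + (d:ℝ)) / ((k:ℝ) * ((k:ℝ)+(d:ℝ)))) ≤ 12 := by
          have h0 : (0:ℝ) ≤ ((k:ℝ)^2 + (k:ℝ)*(d:ℝ) + (d:ℝ)) / ((k:ℝ) * ((k:ℝ)+(d:ℝ))) := by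
            positivity
          have h1 : (0:ℝ) ≤ Real.exp 1 / Real.sqrt 2 := by positivity
          nlinarith
        calc 3 * (Real.exp 1 / Real.sqrt 2) * (d:ℝ)^(1/2:ℝ) * (k:ℝ)^(-(2:ℝ)) *
              (((k:ℝ)^2 + (k:ℝ)*(d:ℝ) + (d:ℝ)) / ((k:ℝ) * ((k:ℝ)+(d:ℝ))))
            = (3 * (Real.exp 1 / Real.sqrt 2) *
                (((k:ℝ)^2 + (k:ℝ)*(d:ℝ) + (d:ℝ)) / ((k:ℝ) * ((k:ℝ)+(d:ℝ))))) *
              ((d:ℝ)^(1/2:ℝ) * (k:ℝ)^(-(2:ℝ))) := by ring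
          _ ≤ 12 * ((d:ℝ)^(1/2:ℝ) * (k:ℝ)^(-(2:ℝ))) :=
              mul_le_mul_of_nonneg_right hcomb hpos
          _ = 12 * (d:ℝ)^(1/2:ℝ) * (k:ℝ)^(-(2:ℝ)) := by ring
end
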